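/- Let m₀, m₁, m₂, β₀, β₁, β₂, ℓ₁, ℓ₂ > 0 and θ₁, θ₂ ∈ ℝ. The symmetric matrix D with rows (-β, -β₁ℓ₁cos θ₁, -β₂ℓ₂cos θ₂), (-β₁ℓ₁cos θ₁, -β₁ℓ₁², 0), (-β₂ℓ₂cos θ₂, 0, -β₂ℓ₂²), where β = β₀ + β₁ + β₂, is negative definite. -/

import Mathlib

theorem stmt_18 (m₀ m₁ m₂ β₀ β₁ β₂ ℓ₁ ℓ₂ θ₁ θ₂ : ℝ)
    (hm0 : 0 < m₀) (hm1 : 0 < m₁) (hm2 : 0 < m₂)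
    (hb0 : 0 < β₀) (hb1 : 0 < β₁) (hb2 : 0 < β₂)
    (hl1 : 0 < ℓ₁) (hl2 : 0 < ℓ₂)
    (D : Matrix (Fin 3) (Fin 3) ℝ)
    (hD : D = Matrix.of
      ![![-(β₀ + β₁ + β₂), -(β₁*ℓ₁*Real.cos θ₁), -(β₂*ℓ₂*Real.cos θ₂)],
        ![-(β₁*ℓ₁*Real.cos θ₁), -(β₁*ℓ₁^2), 0],
        ![-(β₂*ℓ₂*Real.cos θ₂), 0, -(β₂*ℓ₂^2)]]) :
    D.IsSymm ∧ ∀ v : Fin 3 → ℝ, v ≠ 0 → dotProduct v (D.mulVec v) < 0 := by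
  subst hD
  constructor
  · ext i j
    fin_cases i <;> fin_cases j <;> simp [Matrix.IsSymm]
  · intro v hv
    have hne : v 0 ≠ 0 ∨ v 1 ≠ 0 ∨ v 2 ≠ 0 := by
      by_contra h
      push_neg at h
      apply hv
      funext i
      fin_cases i <;> simp [h.1, h.2.1, h.2.2]
    set x := v 0
    set y := v 1
    set z := v 2
    have hc1 : Real.cos θ₁ ^ 2 ≤ 1 := Real.cos_sq_le_one θ₁
    have hc2 : Real.cos θ₂ ^ 2 ≤ 1 := Real.cos_sq_le_one θ₂
    have hexp : dotProduct v
        ((Matrix.of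
          ![![-(β₀ + β₁ + β₂), -(β₁*ℓ₁*Real.cos θ₁), -(β₂*ℓ₂*Real.cos θ₂)],
            ![-(β₁*ℓ₁*Real.cos θ₁), -(β₁*ℓ₁^2), 0],
            ![-(β₂*ℓ₂*Real.cos θ₂), 0, -(β₂*ℓ₂^2)]]).mulVec v)
        = -(β₀ * x^2 + β₁ * (x + ℓ₁ * Real.cos θ₁ * y)^2
            + β₁ * ℓ₁^2 * (1 - Real.cos θ₁^2) * y^2
            + β₂ * (x + ℓ₂ * Real.cos θ₂ * z)^2
            + β₂ * ℓ₂^2 * (1 - Real.cos θ₂^2) * z^2) := by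
      simp [dotProduct, Matrix.mulVec, Fin.sum_univ_three]
      ring
    rw [hexp]
    have h1 : 0 ≤ β₁ * (x + ℓ₁ * Real.cos θ₁ * y)^2 := by positivity
    have h2 : 0 ≤ β₂ * (x + ℓ₂ * Real.cos θ₂ * z)^2 := by positivity
    have h3 : 0 ≤ β₁ * ℓ₁^2 * (1 - Real.cos θ₁^2) * y^2 := by
      apply mul_nonneg (mul_nonneg (by positivity) (by linarith)) (sq_nonneg _)
    have h4 : 0 ≤ β₂ * ℓ₂^2 * (1 - Real.cos θ₂^2) * z^2 := by
      apply mul_nonneg (mul_nonneg (by positivity) (by linarith)) (sq_nonneg _)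
    have h0 : 0 ≤ β₀ * x^2 := by positivity
    rcases hne with hx | hy | hz
    · have : 0 < β₀ * x^2 := by positivity
      linarith
    · -- β₁*(x+ℓ₁c₁y)² + β₁ℓ₁²(1-c₁²)y² = β₁*(x² + 2ℓ₁c₁xy + ℓ₁²y²)
      rcases eq_or_ne x 0 with hx0 | hx0
      · have hy2 : 0 < y^2 := by positivity
        have : 0 < β₁ * (x + ℓ₁ * Real.cos θ₁ * y)^2
            + β₁ * ℓ₁^2 * (1 - Real.cos θ₁^2) * y^2 := by
          rw [hx0]; simp only [zero_add]
          nlinarith [sq_nonneg (Real.cos θ₁), mul_pos hb1 (mul_pos (mul_pos hl1 hl1) hy2)]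
        linarith
      · have : 0 < β₀ * x^2 := by positivity
        linarith
    · rcases eq_or_ne x 0 with hx0 | hx0
      · have hz2 : 0 < z^2 := by positivity
        have : 0 < β₂ * (x + ℓ₂ * Real.cos θ₂ * z)^2
            + β₂ * ℓ₂^2 * (1 - Real.cos θ₂^2) * z^2 := by
          rw [hx0]; simp only [zero_add]
          nlinarith [sq_nonneg (Real.cos θ₂), mul_pos hb2 (mul_pos (mul_pos hl2 hl2) hz2)]
        linarith
      · have : 0 < β₀ * x^2 := by positivity
        linarith
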